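/- Under the factual assumptions, exposure exchangeability/consistency/positivity for both arms a ∈ {0,1}, and the conditional no-relative-effect-on-exposure assumption P(E^1 = 1 | L = l) · P(E^0 = 2 | L = l) = P(E^0 = 1 | L = l) · P(E^1 = 2 | L = l) for all l, and provided all denominators are nonzero, the effect with intervened exposure conditional on L is identified: [P(Y^{1,1} = 1 | L = l)/P(Y^{0,1} = 1 | L = l)] / [P(Y^{1,2} = 2 | L = l)/P(Y^{0,2} = 2 | L = l)] = [P(Y = 1 | A = 1, L = l)/P(Y = 1 | A = 0, L = l)] / [P(Y = 2 | A = 1, L = l)/P(Y = 2 | A = 0, L = l)] for every l ∈ 𝓛. -/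

import Mathlib

open MeasureTheory

/-- `prR P B` is the probability `P(B)` as a real number. -/
noncomputable def prR {Ω : Type*} [MeasurableSpace Ω] (P : Measure Ω) (B : Set Ω) : ℝ :=
  (P B).toReal

/-- `cprR P B C` is the conditional probability `P(B | C) = P(B ∩ C) / P(C)`. -/
noncomputable def cprR {Ω : Type*} [MeasurableSpace Ω] (P : Measure Ω) (B C : Set Ω) : ℝ :=
  (P (B ∩ C)).toReal / (P C).toReal

/-- identification of the effect with intervened exposure (EIE)
conditional on `L`, under the factual assumptions, exposure
exchangeability/consistency/positivity for both arms, and the conditional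
no-relative-effect-on-exposure assumption. -/
theorem stmt6
    {Ω 𝓛 : Type*} [MeasurableSpace Ω] [MeasurableSpace 𝓛] [Fintype 𝓛]
    (P : Measure Ω) [IsProbabilityMeasure P]
    (A : Ω → Fin 2) (E Y : Ω → Fin 3) (L : Ω → 𝓛)
    (Ea : Fin 2 → Ω → Fin 3) (Yae : Fin 2 → Fin 3 → Ω → Fin 3)
    (hA : Measurable A) (hE : Measurable E) (hY : Measurable Y) (hL : Measurable L)
    (hEa : ∀ a, Measurable (Ea a)) (hYae : ∀ a e, Measurable (Yae a e))
    -- factual exposure necessity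
    (fnec : ∀ᵐ ω ∂P, E ω = 0 → Y ω = 0)
    -- factual no cross-infectivity
    (fnocross : ∀ᵐ ω ∂P, (E ω = 1 → Y ω ≠ 2) ∧ (E ω = 2 → Y ω ≠ 1))
    -- generalized exposure exchangeability: E^a ⫫ A | L
    (exchE : ∀ (a : Fin 2) (l : 𝓛) (e : Fin 3) (t : Fin 2),
      P ({ω | Ea a ω = e} ∩ {ω | A ω = t} ∩ {ω | L ω = l}) * P {ω | L ω = l}
        = P ({ω | Ea a ω = e} ∩ {ω | L ω = l}) * P ({ω | A ω = t} ∩ {ω | L ω = l}))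
    -- generalized exposure exchangeability: Y^{a,e} ⫫ A | L, e ∈ {1,2}
    (exchY : ∀ (a : Fin 2) (l : 𝓛) (e : Fin 3), e = 1 ∨ e = 2 → ∀ (y : Fin 3) (t : Fin 2),
      P ({ω | Yae a e ω = y} ∩ {ω | A ω = t} ∩ {ω | L ω = l}) * P {ω | L ω = l}
        = P ({ω | Yae a e ω = y} ∩ {ω | L ω = l}) * P ({ω | A ω = t} ∩ {ω | L ω = l}))
    -- generalized exposure exchangeability: Y^{a,e} ⫫ E^a | A = a, L
    (exchYE : ∀ (a : Fin 2) (l : 𝓛) (e : Fin 3), e = 1 ∨ e = 2 → ∀ (y e' : Fin 3),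
      P ({ω | Yae a e ω = y} ∩ {ω | Ea a ω = e'} ∩ ({ω | A ω = a} ∩ {ω | L ω = l}))
          * P ({ω | A ω = a} ∩ {ω | L ω = l})
        = P ({ω | Yae a e ω = y} ∩ ({ω | A ω = a} ∩ {ω | L ω = l}))
          * P ({ω | Ea a ω = e'} ∩ ({ω | A ω = a} ∩ {ω | L ω = l})))
    -- generalized exposure consistency
    (consE : ∀ᵐ ω ∂P, ∀ a : Fin 2, A ω = a → Ea a ω = E ω)
    (consY : ∀ (a : Fin 2) (e : Fin 3), e = 1 ∨ e = 2 →
      ∀ᵐ ω ∂P, A ω = a → E ω = e → Yae a e ω = Y ω)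
    -- generalized exposure positivity
    (posL : ∀ l : 𝓛, 0 < prR P {ω | L ω = l})
    (posAE : ∀ (a : Fin 2) (l : 𝓛) (e : Fin 3), e = 1 ∨ e = 2 →
      0 < cprR P ({ω | A ω = a} ∩ {ω | E ω = e}) {ω | L ω = l})
    -- conditional no relative effect on exposure
    (ratioexp : ∀ l : 𝓛,
      cprR P {ω | Ea 1 ω = 1} {ω | L ω = l} * cprR P {ω | Ea 0 ω = 2} {ω | L ω = l}
        = cprR P {ω | Ea 0 ω = 1} {ω | L ω = l} * cprR P {ω | Ea 1 ω = 2} {ω | L ω = l})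
    (l : 𝓛)
    -- all denominators are nonzero
    (d1 : cprR P {ω | Yae 0 1 ω = 1} {ω | L ω = l} ≠ 0)
    (d2 : cprR P {ω | Yae 0 2 ω = 2} {ω | L ω = l} ≠ 0)
    (d3 : cprR P {ω | Yae 1 2 ω = 2} {ω | L ω = l} ≠ 0)
    (d4 : cprR P {ω | Y ω = 1} ({ω | A ω = 0} ∩ {ω | L ω = l}) ≠ 0)
    (d5 : cprR P {ω | Y ω = 2} ({ω | A ω = 0} ∩ {ω | L ω = l}) ≠ 0)
    (d6 : cprR P {ω | Y ω = 2} ({ω | A ω = 1} ∩ {ω | L ω = l}) ≠ 0) :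
    (cprR P {ω | Yae 1 1 ω = 1} {ω | L ω = l} / cprR P {ω | Yae 0 1 ω = 1} {ω | L ω = l})
        / (cprR P {ω | Yae 1 2 ω = 2} {ω | L ω = l}
          / cprR P {ω | Yae 0 2 ω = 2} {ω | L ω = l})
      = (cprR P {ω | Y ω = 1} ({ω | A ω = 1} ∩ {ω | L ω = l})
          / cprR P {ω | Y ω = 1} ({ω | A ω = 0} ∩ {ω | L ω = l}))
        / (cprR P {ω | Y ω = 2} ({ω | A ω = 1} ∩ {ω | L ω = l})
          / cprR P {ω | Y ω = 2} ({ω | A ω = 0} ∩ {ω | L ω = l})) := by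
  
  classical
  have hlam0 : (0:ℝ) < (P {ω | L ω = l}).toReal := posL l
  -- key identification per arm/exposure
  have key : ∀ (a : Fin 2) (e : Fin 3), e = 1 ∨ e = 2 →
      cprR P {ω | Y ω = e} ({ω | A ω = a} ∩ {ω | L ω = l})
        = cprR P {ω | Yae a e ω = e} {ω | L ω = l}
          * cprR P {ω | Ea a ω = e} {ω | L ω = l}
      ∧ 0 < cprR P {ω | Ea a ω = e} {ω | L ω = l} := by
    intro a e he
    -- real-valued equations from exchangeability
    have h1r := congrArg ENNReal.toReal (exchY a l e he e a)
    rw [ENNReal.toReal_mul, ENNReal.toReal_mul, Set.inter_assoc] at h1r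
    have h2r := congrArg ENNReal.toReal (exchYE a l e he e e)
    rw [ENNReal.toReal_mul, ENNReal.toReal_mul] at h2r
    have h3r := congrArg ENNReal.toReal (exchE a l e a)
    rw [ENNReal.toReal_mul, ENNReal.toReal_mul, Set.inter_assoc] at h3r
    -- a.e. set identifications
    have hTO : P ({ω | Yae a e ω = e} ∩ {ω | Ea a ω = e} ∩ ({ω | A ω = a} ∩ {ω | L ω = l}))
        = P ({ω | Y ω = e} ∩ ({ω | A ω = a} ∩ {ω | L ω = l})) := by
      apply measure_congr
      rw [Filter.eventuallyEq_set]
      filter_upwards [consE, consY a e he, fnec, fnocross] with ω hcE hcY hnec hcross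
      simp only [Set.mem_inter_iff, Set.mem_setOf_eq]
      constructor
      · rintro ⟨⟨hy, hea⟩, ha, hl⟩
        have hEe : E ω = e := by rw [← hcE a ha]; exact hea
        exact ⟨by rw [← hcY ha hEe]; exact hy, ha, hl⟩
      · rintro ⟨hy, ha, hl⟩
        have hEe : E ω = e := by
          rcases he with rfl | rfl
          · by_contra hne
            have h0 : E ω ≠ 0 := fun h => by simp [hnec h] at hy
            have h2 : E ω ≠ 2 := fun h => hcross.2 h (by rw [hy])
            omega
          · by_contra hne
            have h0 : E ω ≠ 0 := fun h => by simp [hnec h] at hy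
            have h2 : E ω ≠ 1 := fun h => hcross.1 h (by rw [hy])
            omega
        have hea : Ea a ω = e := by rw [hcE a ha]; exact hEe
        exact ⟨⟨by rw [hcY ha hEe]; exact hy, hea⟩, ha, hl⟩
    have hRE : P ({ω | Ea a ω = e} ∩ ({ω | A ω = a} ∩ {ω | L ω = l}))
        = P (({ω | A ω = a} ∩ {ω | E ω = e}) ∩ {ω | L ω = l}) := by
      apply measure_congr
      rw [Filter.eventuallyEq_set]
      filter_upwards [consE] with ω hcE
      simp only [Set.mem_inter_iff, Set.mem_setOf_eq]
      constructor
      · rintro ⟨hea, ha, hl⟩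
        exact ⟨⟨ha, by rw [← hcE a ha]; exact hea⟩, hl⟩
      · rintro ⟨⟨ha, hEe⟩, hl⟩
        exact ⟨by rw [hcE a ha]; exact hEe, ha, hl⟩
    -- positivity
    have hposAE := posAE a l e he
    rw [cprR] at hposAE
    have hnum : 0 < (P (({ω | A ω = a} ∩ {ω | E ω = e}) ∩ {ω | L ω = l})).toReal := by
      rcases div_pos_iff.mp hposAE with ⟨h, _⟩ | ⟨_, h⟩
      · exact h
      · exact absurd h (not_lt.mpr hlam0.le)
    have hR0 : 0 < (P ({ω | Ea a ω = e} ∩ ({ω | A ω = a} ∩ {ω | L ω = l}))).toReal := by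
      rw [hRE]; exact hnum
    have halpha : 0 < (P ({ω | A ω = a} ∩ {ω | L ω = l})).toReal := by
      refine lt_of_lt_of_le hR0 ?_
      exact ENNReal.toReal_le_toReal (measure_ne_top P _) (measure_ne_top P _) |>.mpr
        (measure_mono Set.inter_subset_right)
    -- abbreviations
    set lam := (P {ω | L ω = l}).toReal
    set alp := (P ({ω | A ω = a} ∩ {ω | L ω = l})).toReal
    set Q := (P ({ω | Yae a e ω = e} ∩ {ω | L ω = l})).toReal
    set S := (P ({ω | Yae a e ω = e} ∩ ({ω | A ω = a} ∩ {ω | L ω = l}))).toReal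
    set T := (P ({ω | Yae a e ω = e} ∩ {ω | Ea a ω = e} ∩ ({ω | A ω = a} ∩ {ω | L ω = l}))).toReal
    set R := (P ({ω | Ea a ω = e} ∩ ({ω | A ω = a} ∩ {ω | L ω = l}))).toReal
    set Pi := (P ({ω | Ea a ω = e} ∩ {ω | L ω = l})).toReal
    set O := (P ({ω | Y ω = e} ∩ ({ω | A ω = a} ∩ {ω | L ω = l}))).toReal
    have hTO' : T = O := congrArg ENNReal.toReal hTO
    -- derive O * lam = Q * R
    have h4 : T * lam * alp = Q * R * alp := by linear_combination lam * h2r + R * h1r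
    have hOl : O * lam = Q * R := by
      rw [← hTO']
      exact mul_right_cancel₀ (ne_of_gt halpha) h4
    have hPi0 : 0 < Pi := by
      have : Pi * alp = R * lam := h3r.symm
      nlinarith
    constructor
    · show O / alp = Q / lam * (Pi / lam)
      rw [div_mul_div_comm, div_eq_div_iff (ne_of_gt halpha)
        (by positivity : (0:ℝ) < lam * lam).ne']
      linear_combination lam * hOl + Q * h3r
    · show 0 < Pi / lam
      exact div_pos hPi0 hlam0
  -- assemble
  obtain ⟨k11, _⟩ := key 1 1 (Or.inl rfl)
  obtain ⟨k01, p01⟩ := key 0 1 (Or.inl rfl)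
  obtain ⟨k12, p12⟩ := key 1 2 (Or.inr rfl)
  obtain ⟨k02, p02⟩ := key 0 2 (Or.inr rfl)
  rw [k11, k01, k12, k02]
  have hp := ratioexp l
  set q11 := cprR P {ω | Yae 1 1 ω = 1} {ω | L ω = l}
  set q01 := cprR P {ω | Yae 0 1 ω = 1} {ω | L ω = l}
  set q12 := cprR P {ω | Yae 1 2 ω = 2} {ω | L ω = l}
  set q02 := cprR P {ω | Yae 0 2 ω = 2} {ω | L ω = l}
  set e11 := cprR P {ω | Ea 1 ω = 1} {ω | L ω = l}
  set e01 := cprR P {ω | Ea 0 ω = 1} {ω | L ω = l}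
  set e12 := cprR P {ω | Ea 1 ω = 2} {ω | L ω = l}
  set e02 := cprR P {ω | Ea 0 ω = 2} {ω | L ω = l}
  field_simp [d1, d2, d3, p01.ne', p12.ne', p02.ne']
  linear_combination (-q11) * hp
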